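/- arXiv:2006.09958 — 2 statements merged into one kernel-verified Lean document; each statement's English description precedes it below -/
import Mathlib

section
/- Let u : ℕ → 𝔻 be a bounded arithmetic function with values in the closed unit disk. Then u is mean slowly varying, i.e., (1/N) Σ_{n ≤ N} |u(n+1) − u(n)| → 0 as N → ∞, if and only if every measure ν ∈ V(u) is concentrated on the set of fixed points of the shift (equivalently, Z_1 = Z_0 ν-almost everywhere for every ν ∈ V(u), so that every Furstenberg system of u is measure-theoretically the identity). -/
open MeasureTheory Filter Topology Set
open scoped NNReal ENNReal

noncomputable section

/-- The left shift on sequence space. -/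
def shift : (ℕ → ℂ) → (ℕ → ℂ) := fun y n => y (n + 1)

/-- The point of `𝔻^ℕ` associated with the arithmetic function `u` (indexed from 1). -/
def pt (u : ℕ → ℂ) : ℕ → ℂ := fun n => u (n + 1)

/-- `ν ∈ V(u)`: `ν` is a weak* limit of a subsequence of the empirical measures
`E_N(u) = (1/N) Σ_{0 ≤ n < N} δ_{S^n u}`. -/
def memV (u : ℕ → ℂ) (ν : Measure (ℕ → ℂ)) : Prop :=
  ∃ N : ℕ → ℕ, StrictMono N ∧ (∀ m, 1 ≤ N m) ∧
    ∀ f : BoundedContinuousFunction (ℕ → ℂ) ℝ,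
      Filter.Tendsto (fun m => (N m : ℝ)⁻¹ * ∑ n ∈ Finset.range (N m), f (shift^[n] (pt u)))
        atTop (𝓝 (∫ y, f y ∂ν))

namespace MSV

/-! ### A continuous map `ℝ → (ℕ → ℂ)` whose range contains the unit polydisk -/

/-- zeroth ternary-ish digit, continuous on `ℝ`. -/
def cd (t : ℝ) : ℝ := max 0 (min 1 (3 * t - 1))

lemma cd_continuous : Continuous cd := by
  unfold cd; fun_prop

lemma cd_nonneg (t : ℝ) : 0 ≤ cd t := le_max_left _ _

lemma cd_le_one (t : ℝ) : cd t ≤ 1 := max_le zero_le_one (min_le_left _ _)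

/-- shift map for Cantor digits, continuous on `ℝ`. -/
def Tm (t : ℝ) : ℝ := 3 * t - 2 * cd t

lemma Tm_continuous : Continuous Tm := by
  unfold Tm; exact (continuous_const.mul continuous_id).sub (continuous_const.mul cd_continuous)

/-- `i`-th digit function. -/
def dig (i : ℕ) (t : ℝ) : ℝ := cd (Tm^[i] t)

lemma dig_continuous (i : ℕ) : Continuous (dig i) :=
  cd_continuous.comp (Tm_continuous.iterate i)

lemma dig_nonneg (i : ℕ) (t : ℝ) : 0 ≤ dig i t := cd_nonneg _
lemma dig_le_one (i : ℕ) (t : ℝ) : dig i t ≤ 1 := cd_le_one _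

def IsBits (a : ℕ → ℝ) : Prop := ∀ i, a i = 0 ∨ a i = 1

lemma IsBits.nonneg {a : ℕ → ℝ} (h : IsBits a) (i : ℕ) : 0 ≤ a i := by
  rcases h i with h' | h' <;> rw [h'] <;> norm_num

lemma IsBits.le_one {a : ℕ → ℝ} (h : IsBits a) (i : ℕ) : a i ≤ 1 := by
  rcases h i with h' | h' <;> rw [h'] <;> norm_num

lemma IsBits.shift {a : ℕ → ℝ} (h : IsBits a) : IsBits (fun i => a (i + 1)) :=
  fun i => h (i + 1)

/-- The Cantor-like point with digit sequence `a`. -/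
def cant (a : ℕ → ℝ) : ℝ := ∑' i, 2 * a i / 3 ^ (i + 1)

lemma summable_geom_aux : Summable (fun i : ℕ => 2 / 3 ^ (i + 1) : ℕ → ℝ) := by
  have : (fun i : ℕ => 2 / 3 ^ (i + 1) : ℕ → ℝ) = fun i : ℕ => (2/3) * (1/3 : ℝ) ^ i := by
    funext i
    rw [pow_succ, one_div_pow]
    field_simp
  rw [this]
  exact (summable_geometric_of_lt_one (by norm_num) (by norm_num)).mul_left _

lemma tsum_geom_aux : ∑' i : ℕ, (2 / 3 ^ (i + 1) : ℝ) = 1 := by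
  have : (fun i : ℕ => 2 / 3 ^ (i + 1) : ℕ → ℝ) = fun i : ℕ => (2/3) * (1/3 : ℝ) ^ i := by
    funext i
    rw [pow_succ, one_div_pow]
    field_simp
  rw [this, tsum_mul_left, tsum_geometric_of_lt_one (by norm_num) (by norm_num)]
  norm_num

lemma IsBits.summable {a : ℕ → ℝ} (h : IsBits a) :
    Summable (fun i => 2 * a i / 3 ^ (i + 1)) := by
  apply Summable.of_nonneg_of_le
    (fun i => div_nonneg (by nlinarith [h.nonneg i]) (by positivity)) _ summable_geom_aux
  intro i
  have h1 := h.le_one i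
  have h2 : (0:ℝ) < 3 ^ (i + 1) := by positivity
  rw [div_le_div_iff₀ h2 h2]
  nlinarith [h.nonneg i]

lemma cant_nonneg {a : ℕ → ℝ} (h : IsBits a) : 0 ≤ cant a :=
  tsum_nonneg (fun i => div_nonneg (by nlinarith [h.nonneg i]) (by positivity))

lemma cant_le_one {a : ℕ → ℝ} (h : IsBits a) : cant a ≤ 1 := by
  rw [← tsum_geom_aux]
  apply Summable.tsum_le_tsum _ h.summable summable_geom_aux
  intro i
  have h1 := h.le_one i
  have h2 : (0:ℝ) < 3 ^ (i + 1) := by positivity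
  rw [div_le_div_iff₀ h2 h2]
  nlinarith [h.nonneg i]

lemma cant_succ {a : ℕ → ℝ} (h : IsBits a) :
    cant a = 2 * a 0 / 3 + cant (fun i => a (i + 1)) / 3 := by
  rw [cant, h.summable.tsum_eq_zero_add]
  have e1 : (2:ℝ) * a 0 / 3 ^ (0 + 1) = 2 * a 0 / 3 := by norm_num
  have e2 : ∑' i : ℕ, 2 * a (i + 1) / 3 ^ (i + 1 + 1) = cant (fun i => a (i + 1)) / 3 := by
    rw [cant, ← tsum_div_const]
    congr 1
    funext i
    rw [pow_succ]
    field_simp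
  rw [e1, e2]

lemma cd_cant {a : ℕ → ℝ} (h : IsBits a) :
    cd (cant a) = a 0 ∧ Tm (cant a) = cant (fun i => a (i + 1)) := by
  have h0 := cant_nonneg h.shift
  have h1 := cant_le_one h.shift
  set c' := cant (fun i => a (i + 1)) with hc'
  have hs := cant_succ h
  rcases h 0 with ha | ha
  · rw [ha] at hs
    have ht : cant a = c' / 3 := by rw [hs]; ring
    have hcd : cd (cant a) = 0 := by
      rw [cd, ht]
      have : 3 * (c' / 3) - 1 = c' - 1 := by ring
      rw [this, min_eq_right (by linarith), max_eq_left (by linarith)]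
    constructor
    · rw [hcd, ha]
    · rw [Tm, hcd, ht]; ring
  · rw [ha] at hs
    have ht : cant a = 2 / 3 + c' / 3 := by rw [hs]; ring
    have hcd : cd (cant a) = 1 := by
      rw [cd, ht]
      have : 3 * (2 / 3 + c' / 3) - 1 = 1 + c' := by ring
      rw [this, min_eq_left (by linarith), max_eq_right (by linarith)]
    constructor
    · rw [hcd, ha]
    · rw [Tm, hcd, ht]; ring

lemma dig_cant : ∀ (i : ℕ) (a : ℕ → ℝ), IsBits a → dig i (cant a) = a i := by
  intro i
  induction i with
  | zero => intro a h; exact (cd_cant h).1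
  | succ i ih =>
    intro a h
    have : dig (i + 1) (cant a) = dig i (Tm (cant a)) := by
      rw [dig, dig, Function.iterate_succ_apply]
    rw [this, (cd_cant h).2, ih _ h.shift]

/-- extract the binary number packed in digits `Nat.pair k i`, `i = 0, 1, 2, ...`. -/
def binpart (k : ℕ) (t : ℝ) : ℝ := ∑' i, dig (Nat.pair k i) t / 2 ^ (i + 1)

lemma binpart_continuous (k : ℕ) : Continuous (binpart k) := by
  apply continuous_tsum (u := fun i : ℕ => (1/2 : ℝ) ^ (i+1))
  · exact fun i => (dig_continuous _).div_const _
  · exact (summable_geometric_of_lt_one (by norm_num) (by norm_num)).comp_injective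
      (add_left_injective 1)
  · intro i t
    rw [Real.norm_eq_abs, abs_div, abs_of_nonneg (dig_nonneg _ _), abs_of_nonneg (by positivity),
      one_div, inv_pow]
    rw [div_eq_mul_inv]
    have h2 : (0:ℝ) < 2 ^ (i+1) := by positivity
    calc dig (Nat.pair k i) t * ((2:ℝ) ^ (i+1))⁻¹ ≤ 1 * ((2:ℝ)^(i+1))⁻¹ := by
          apply mul_le_mul_of_nonneg_right (dig_le_one _ _) (by positivity)
      _ = ((2:ℝ)^(i+1))⁻¹ := by ring

/-- The space-filling-ish curve. -/
def curve (t : ℝ) : ℕ → ℂ := fun n =>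
  ((2 * binpart (2*n) t - 1 : ℝ) : ℂ) + ((2 * binpart (2*n+1) t - 1 : ℝ) : ℂ) * Complex.I

lemma curve_continuous : Continuous curve := by
  apply continuous_pi
  intro n
  have hc : ∀ k : ℕ, Continuous fun t => (2 * binpart k t - 1 : ℝ) :=
    fun k => (continuous_const.mul (binpart_continuous k)).sub continuous_const
  exact (Complex.continuous_ofReal.comp (hc _)).add
    ((Complex.continuous_ofReal.comp (hc _)).mul continuous_const)

/-- binary expansions exist -/
lemma exists_bits (r : ℝ) (h0 : 0 ≤ r) (h1 : r ≤ 1) :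
    ∃ b : ℕ → ℝ, IsBits b ∧ ∑' i, b i / 2 ^ (i + 1) = r := by
  set s : ℕ → ℝ := fun k =>
    Nat.rec 0 (fun k sk => sk + if sk + (1/2)^(k+1) ≤ r then (1/2:ℝ)^(k+1) else 0) k with hsdef
  have hs0 : s 0 = 0 := rfl
  have hstep : ∀ k, s (k+1) = s k + (if s k + (1/2)^(k+1) ≤ r then (1/2:ℝ)^(k+1) else 0) :=
    fun k => rfl
  have hinv : ∀ k, 0 ≤ r - s k ∧ r - s k ≤ (1/2)^k := by
    intro k
    induction k with
    | zero => rw [hs0]; norm_num; exact ⟨h0, h1⟩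
    | succ k ih =>
      rw [hstep k]
      have hp : (1/2:ℝ)^(k+1) = (1/2)^k * (1/2) := pow_succ _ _
      by_cases h : s k + (1/2)^(k+1) ≤ r
      · rw [if_pos h]
        constructor
        · linarith
        · nlinarith [ih.2]
      · rw [if_neg h]
        push_neg at h
        refine ⟨by linarith [ih.1], by linarith⟩
  set b : ℕ → ℝ := fun k => if s k + (1/2)^(k+1) ≤ r then (1:ℝ) else 0 with hbdef
  have hbits : IsBits b := by
    intro i
    by_cases h : s i + (1/2)^(i+1) ≤ r
    · right; simp only [hbdef, if_pos h]
    · left; simp only [hbdef, if_neg h]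
  have hsum : ∀ n, ∑ i ∈ Finset.range n, b i * (1/2)^(i+1) = s n := by
    intro n
    induction n with
    | zero => simp [hs0]
    | succ n ih =>
      rw [Finset.sum_range_succ, ih, hstep n]
      by_cases h : s n + (1/2)^(n+1) ≤ r
      · rw [if_pos h]; simp only [hbdef, if_pos h]; ring
      · rw [if_neg h]; simp only [hbdef, if_neg h]; ring
  have hlim : Tendsto s atTop (𝓝 r) := by
    have hlow : Tendsto (fun n : ℕ => r - (1/2:ℝ)^n) atTop (𝓝 r) := by
      have := tendsto_pow_atTop_nhds_zero_of_lt_one (by norm_num : (0:ℝ) ≤ 1/2)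
        (by norm_num : (1/2:ℝ) < 1)
      have h2 := (tendsto_const_nhds (x := r) (f := atTop (α := ℕ))).sub this
      simpa using h2
    apply tendsto_of_tendsto_of_tendsto_of_le_of_le hlow tendsto_const_nhds
    · intro n; linarith [(hinv n).2]
    · intro n; linarith [(hinv n).1]
  have hgeo : Summable (fun i : ℕ => (1/2:ℝ)^(i+1)) :=
    (summable_geometric_of_lt_one (by norm_num) (by norm_num)).comp_injective
      (add_left_injective 1)
  have hsummable : Summable (fun i => b i * (1/2:ℝ)^(i+1)) := by
    refine Summable.of_nonneg_of_le
      (fun i => mul_nonneg (hbits.nonneg i) (by positivity)) (fun i => ?_) hgeo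
    calc b i * (1/2:ℝ)^(i+1) ≤ 1 * (1/2:ℝ)^(i+1) :=
          mul_le_mul_of_nonneg_right (hbits.le_one i) (by positivity)
      _ = (1/2:ℝ)^(i+1) := one_mul _
  have hts : ∑' i, b i * (1/2:ℝ)^(i+1) = r := by
    apply tendsto_nhds_unique _ hlim
    have := hsummable.hasSum.tendsto_sum_nat
    simpa only [hsum] using this
  refine ⟨b, hbits, ?_⟩
  rw [← hts]
  congr 1
  funext i
  rw [div_eq_mul_inv, one_div, inv_pow]

lemma binpart_cant {a : ℕ → ℝ} (h : IsBits a) (k : ℕ) :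
    binpart k (cant a) = ∑' i, a (Nat.pair k i) / 2 ^ (i + 1) := by
  unfold binpart
  congr 1
  funext i
  rw [dig_cant _ _ h]

lemma curve_surj (x : ℕ → ℂ) (hx : ∀ n, ‖x n‖ ≤ 1) :
    ∃ t ∈ Set.Icc (0:ℝ) 1, curve t = x := by
  have habs : ∀ n, |(x n).re| ≤ 1 ∧ |(x n).im| ≤ 1 := by
    intro n
    constructor
    · exact le_trans (Complex.abs_re_le_norm (x n)) (hx n)
    · exact le_trans (Complex.abs_im_le_norm (x n)) (hx n)
  have hre : ∀ n, 0 ≤ ((x n).re + 1)/2 ∧ ((x n).re + 1)/2 ≤ 1 := by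
    intro n
    rcases abs_le.mp (habs n).1 with ⟨h1, h2⟩
    constructor <;> linarith
  have him : ∀ n, 0 ≤ ((x n).im + 1)/2 ∧ ((x n).im + 1)/2 ≤ 1 := by
    intro n
    rcases abs_le.mp (habs n).2 with ⟨h1, h2⟩
    constructor <;> linarith
  choose bre hbre hbre2 using fun n => exists_bits (((x n).re + 1)/2) (hre n).1 (hre n).2
  choose bim hbim hbim2 using fun n => exists_bits (((x n).im + 1)/2) (him n).1 (him n).2
  set a : ℕ → ℝ := fun m =>
    if (Nat.unpair m).1 % 2 = 0 then bre ((Nat.unpair m).1 / 2) (Nat.unpair m).2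
    else bim ((Nat.unpair m).1 / 2) (Nat.unpair m).2 with hadef
  have hab : IsBits a := by
    intro m
    by_cases h : (Nat.unpair m).1 % 2 = 0
    · simp only [hadef, if_pos h]; exact hbre _ _
    · simp only [hadef, if_neg h]; exact hbim _ _
  refine ⟨cant a, ⟨cant_nonneg hab, cant_le_one hab⟩, ?_⟩
  funext n
  have hmod0 : (2*n) % 2 = 0 := by omega
  have hdiv0 : (2*n) / 2 = n := by omega
  have hmod1 : (2*n+1) % 2 = 1 := by omega
  have hdiv1 : (2*n+1) / 2 = n := by omega
  have hpre : binpart (2*n) (cant a) = ((x n).re + 1)/2 := by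
    rw [binpart_cant hab]
    rw [show (fun i => a (Nat.pair (2*n) i) / 2 ^ (i+1)) = fun i => bre n i / 2 ^ (i+1) by
      funext i
      simp only [hadef, Nat.unpair_pair, hmod0, hdiv0, if_pos]]
    exact hbre2 n
  have hpim : binpart (2*n+1) (cant a) = ((x n).im + 1)/2 := by
    rw [binpart_cant hab]
    rw [show (fun i => a (Nat.pair (2*n+1) i) / 2 ^ (i+1)) = fun i => bim n i / 2 ^ (i+1) by
      funext i
      simp only [hadef, Nat.unpair_pair, hmod1, hdiv1]
      norm_num]
    exact hbim2 n
  show ((2 * binpart (2*n) (cant a) - 1 : ℝ) : ℂ)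
      + ((2 * binpart (2*n+1) (cant a) - 1 : ℝ) : ℂ) * Complex.I = x n
  rw [hpre, hpim]
  rw [show 2 * (((x n).re + 1)/2) - 1 = (x n).re by ring,
    show 2 * (((x n).im + 1)/2) - 1 = (x n).im by ring]
  exact Complex.re_add_im (x n)


lemma prob_toReal_le_one (μ : Measure ℝ) [IsProbabilityMeasure μ] (s : Set ℝ) :
    (μ s).toReal ≤ 1 := by
  calc (μ s).toReal ≤ (μ Set.univ).toReal :=
        ENNReal.toReal_mono (measure_ne_top _ _) (measure_mono (Set.subset_univ _))
    _ = 1 := by simp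

lemma Ioc_union_touch {p₁ q₁ p₂ q₂ : ℝ} (h1 : p₂ ≤ q₁) (h2 : p₁ ≤ q₂) :
    Ioc p₁ q₁ ∪ Ioc p₂ q₂ = Ioc (min p₁ p₂) (max q₁ q₂) := by
  ext x
  simp only [mem_union, mem_Ioc, min_lt_iff, le_max_iff]
  constructor
  · rintro (⟨h3, h4⟩ | ⟨h3, h4⟩)
    · exact ⟨Or.inl h3, Or.inl h4⟩
    · exact ⟨Or.inr h3, Or.inr h4⟩
  · rintro ⟨hmin, hmax⟩
    by_cases hx : p₂ < x ∧ x ≤ q₂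
    · exact Or.inr hx
    · left
      rcases not_and_or.mp hx with hx' | hx'
      · push_neg at hx'
        rcases hmin with h | h
        · exact ⟨h, le_trans hx' h1⟩
        · exact absurd h (not_lt.mpr hx')
      · push_neg at hx'
        rcases hmax with h | h
        · refine ⟨?_, h⟩
          rcases hmin with h' | h'
          · exact h'
          · linarith
        · linarith
  
/-- The key finite-union estimate used in proving the portmanteau liminf condition. -/
lemma main_finite
    (μm : ℕ → Measure ℝ) (hprob : ∀ m, IsProbabilityMeasure (μm m))
    (cr : ℚ → ℝ) (hcr : Monotone cr)
    (hlim : ∀ q : ℚ, Tendsto (fun m => (μm m (Set.Iic (q:ℝ))).toReal) atTop (𝓝 (cr q)))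
    (ν : Measure ℝ)
    (hνIoc : ∀ p q q'' : ℚ, q < q'' →
        ν (Set.Ioc (p:ℝ) (q:ℝ)) ≤ ENNReal.ofReal (cr q'' - cr p))
    (G : Set ℝ) :
    ∀ (n : ℕ) (s : Finset (ℚ × ℚ)), s.card = n →
      (∀ pq ∈ s, ∃ q' : ℚ, pq.2 < q' ∧ Set.Ioc ((pq.1 : ℝ)) ((q' : ℝ)) ⊆ G) →
      ν (⋃ pq ∈ s, Set.Ioc ((pq.1 : ℝ)) ((pq.2 : ℝ)))
        ≤ ENNReal.ofReal (Filter.liminf (fun m => (μm m G).toReal) atTop) := by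
  intro n
  induction n using Nat.strong_induction_on with
  | _ n ih =>
  intro s hcard hP
  classical
  by_cases htouch : ∃ a ∈ s, ∃ b ∈ s, a ≠ b ∧ b.1 ≤ a.2 ∧ a.1 ≤ b.2
  · -- merge two touching intervals and recurse
    obtain ⟨a, ha, b, hb, hab, h1, h2⟩ := htouch
    set m' : ℚ × ℚ := (min a.1 b.1, max a.2 b.2) with hm'
    have hbmem : b ∈ s.erase a := Finset.mem_erase.mpr ⟨fun h => hab h.symm, hb⟩
    set s' : Finset (ℚ × ℚ) := insert m' ((s.erase a).erase b) with hs'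
    have hcard2 : 2 ≤ s.card := Finset.one_lt_card.mpr ⟨a, ha, b, hb, hab⟩
    have hcard' : s'.card < n := by
      have e1 : ((s.erase a).erase b).card = s.card - 2 := by
        rw [Finset.card_erase_of_mem hbmem, Finset.card_erase_of_mem ha]
        omega
      have h9 := Finset.card_insert_le m' ((s.erase a).erase b)
      have h10 : s'.card = (insert m' ((s.erase a).erase b)).card := by rw [hs']
      omega
    -- margins for s'
    have hP' : ∀ pq ∈ s', ∃ q' : ℚ, pq.2 < q' ∧ Set.Ioc ((pq.1 : ℝ)) ((q' : ℝ)) ⊆ G := by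
      intro pq hpq
      rcases Finset.mem_insert.mp hpq with rfl | hpq'
      · obtain ⟨qa, hqa1, hqa2⟩ := hP a ha
        obtain ⟨qb, hqb1, hqb2⟩ := hP b hb
        by_cases hcase : a.2 ≤ b.2
        · refine ⟨qb, by simp only [hm']; exact lt_of_le_of_lt (max_le hcase le_rfl) hqb1, ?_⟩
          intro x hx
          rcases hx with ⟨hx1, hx2⟩
          by_cases hxb : (b.1 : ℝ) < x
          · exact hqb2 ⟨hxb, hx2⟩
          · push_neg at hxb
            have hxa1 : (a.1 : ℝ) < x := by
              have : ((min a.1 b.1 : ℚ) : ℝ) = min (a.1 : ℝ) (b.1 : ℝ) := by push_cast; rfl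
              rw [hm'] at hx1; simp only at hx1
              rw [this] at hx1
              rcases min_lt_iff.mp hx1 with h | h
              · exact h
              · linarith
            have hxa2 : x ≤ (a.2 : ℝ) := le_trans hxb (by exact_mod_cast h1)
            exact hqa2 ⟨hxa1, le_trans hxa2 (by exact_mod_cast hqa1.le)⟩
        · push_neg at hcase
          refine ⟨qa, by simp only [hm']; exact lt_of_le_of_lt (max_le le_rfl hcase.le) hqa1, ?_⟩
          intro x hx
          rcases hx with ⟨hx1, hx2⟩
          by_cases hxa : (a.1 : ℝ) < x
          · exact hqa2 ⟨hxa, hx2⟩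
          · push_neg at hxa
            have hxb1 : (b.1 : ℝ) < x := by
              have : ((min a.1 b.1 : ℚ) : ℝ) = min (a.1 : ℝ) (b.1 : ℝ) := by push_cast; rfl
              rw [hm'] at hx1; simp only at hx1
              rw [this] at hx1
              rcases min_lt_iff.mp hx1 with h | h
              · linarith
              · exact h
            have hxb2 : x ≤ (b.2 : ℝ) := le_trans hxa (by exact_mod_cast h2)
            exact hqb2 ⟨hxb1, le_trans hxb2 (by exact_mod_cast hqb1.le)⟩
      · exact hP pq (Finset.mem_of_mem_erase (Finset.mem_of_mem_erase hpq'))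
    have hunion : (⋃ pq ∈ s, Set.Ioc ((pq.1 : ℝ)) ((pq.2 : ℝ)))
        = ⋃ pq ∈ s', Set.Ioc ((pq.1 : ℝ)) ((pq.2 : ℝ)) := by
      have hs : s = insert a (insert b ((s.erase a).erase b)) := by
        rw [Finset.insert_erase hbmem, Finset.insert_erase ha]
      conv_lhs => rw [hs]
      rw [Finset.set_biUnion_insert, Finset.set_biUnion_insert, hs', Finset.set_biUnion_insert]
      rw [← Set.union_assoc]
      congr 1
      rw [Ioc_union_touch (by exact_mod_cast h1) (by exact_mod_cast h2)]
      simp only [hm']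
      push_cast
      rfl
    rw [hunion]
    exact ih s'.card hcard' s' rfl hP'
  · -- pairwise separated case
    push_neg at htouch
    set s' : Finset (ℚ × ℚ) := s.filter (fun pq => pq.1 < pq.2) with hs'
    have hsub' : s' ⊆ s := Finset.filter_subset _ _
    -- replace the union by the union over s'
    have hunion : (⋃ pq ∈ s, Set.Ioc ((pq.1 : ℝ)) ((pq.2 : ℝ)))
        = ⋃ pq ∈ s', Set.Ioc ((pq.1 : ℝ)) ((pq.2 : ℝ)) := by
      apply Set.Subset.antisymm
      · intro x hx
        simp only [Set.mem_iUnion] at hx ⊢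
        obtain ⟨pq, hpq, hxI⟩ := hx
        refine ⟨pq, Finset.mem_filter.mpr ⟨hpq, ?_⟩, hxI⟩
        have : (pq.1 : ℝ) < (pq.2 : ℝ) := lt_of_lt_of_le hxI.1 hxI.2
        exact_mod_cast this
      · exact Set.biUnion_subset_biUnion_left (fun x hx => hsub' hx)
    rw [hunion]
    -- margin function
    have hPex : ∀ pq ∈ s', ∃ q' : ℚ, pq.2 < q' ∧ Set.Ioc ((pq.1 : ℝ)) ((q' : ℝ)) ⊆ G :=
      fun pq hpq => hP pq (hsub' hpq)
    set qf : ℚ × ℚ → ℚ := fun a =>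
      if h : ∃ q' : ℚ, a.2 < q' ∧ Set.Ioc ((a.1 : ℝ)) ((q' : ℝ)) ⊆ G then h.choose else a.2 + 1
      with hqf
    have hqf1 : ∀ a ∈ s', a.2 < qf a := by
      intro a ha
      rw [hqf]; simp only
      rw [dif_pos (hPex a ha)]
      exact (hPex a ha).choose_spec.1
    have hqf2 : ∀ a ∈ s', Set.Ioc ((a.1 : ℝ)) ((qf a : ℝ)) ⊆ G := by
      intro a ha
      rw [hqf]; simp only
      rw [dif_pos (hPex a ha)]
      exact (hPex a ha).choose_spec.2
    -- shrunk right endpoints ensuring disjointness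
    set Q : ℚ × ℚ → Finset ℚ := fun a =>
      insert (qf a) ((s'.image Prod.fst).filter (fun r => a.2 < r)) with hQ
    set q'' : ℚ × ℚ → ℚ := fun a => (Q a).min' ⟨qf a, Finset.mem_insert_self _ _⟩ with hq''
    have hq''le : ∀ a, q'' a ≤ qf a := fun a => Finset.min'_le _ _ (Finset.mem_insert_self _ _)
    have hq''gt : ∀ a ∈ s', a.2 < q'' a := by
      intro a ha
      rw [hq'']; simp only
      apply (Finset.lt_min'_iff _ _).mpr
      intro y hy
      rcases Finset.mem_insert.mp hy with rfl | hy'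
      · exact hqf1 a ha
      · exact (Finset.mem_filter.mp hy').2
    have hq''fst : ∀ a, ∀ b ∈ s', a.2 < b.1 → q'' a ≤ b.1 := by
      intro a b hb hab
      apply Finset.min'_le
      apply Finset.mem_insert_of_mem
      exact Finset.mem_filter.mpr ⟨Finset.mem_image_of_mem _ hb, hab⟩
    set E : ℚ × ℚ → Set ℝ := fun a => Set.Ioc ((a.1 : ℝ)) ((q'' a : ℝ)) with hE
    have hEG : ∀ a ∈ s', E a ⊆ G := by
      intro a ha
      refine subset_trans ?_ (hqf2 a ha)
      apply Set.Ioc_subset_Ioc le_rfl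
      exact_mod_cast hq''le a
    have hdisj : (↑s' : Set (ℚ × ℚ)).PairwiseDisjoint E := by
      intro a ha b hb hab
      have ha' : a ∈ s' := ha
      have hb' : b ∈ s' := hb
      have hnt := htouch a (hsub' ha') b (hsub' hb') hab
      by_cases hc : b.1 ≤ a.2
      · have h4 : b.2 < a.1 := hnt hc
        have h5 : q'' b ≤ a.1 := hq''fst b a ha' h4
        refine Set.disjoint_left.mpr ?_
        intro x hxa hxb
        have : x ≤ (q'' b : ℝ) := hxb.2
        have h6 : (q'' b : ℝ) ≤ (a.1 : ℝ) := by exact_mod_cast h5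
        exact absurd hxa.1 (not_lt.mpr (le_trans this h6))
      · push_neg at hc
        have h5 : q'' a ≤ b.1 := hq''fst a b hb' hc
        refine Set.disjoint_left.mpr ?_
        intro x hxa hxb
        have : x ≤ (q'' a : ℝ) := hxa.2
        have h6 : (q'' a : ℝ) ≤ (b.1 : ℝ) := by exact_mod_cast h5
        exact absurd hxb.1 (not_lt.mpr (le_trans this h6))
    -- the estimate
    set S : ℝ := ∑ a ∈ s', (cr (q'' a) - cr a.1) with hS
    have hterm_nonneg : ∀ a ∈ s', 0 ≤ cr (q'' a) - cr a.1 := by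
      intro a ha
      have h7 : a.1 < q'' a :=
        lt_trans (Finset.mem_filter.mp ha).2 (hq''gt a ha)
      have := hcr h7.le
      linarith
    have step1 : ν (⋃ pq ∈ s', Set.Ioc ((pq.1 : ℝ)) ((pq.2 : ℝ)))
        ≤ ENNReal.ofReal S := by
      calc ν (⋃ pq ∈ s', Set.Ioc ((pq.1 : ℝ)) ((pq.2 : ℝ)))
          ≤ ∑ a ∈ s', ν (Set.Ioc ((a.1 : ℝ)) ((a.2 : ℝ))) := measure_biUnion_finset_le _ _
        _ ≤ ∑ a ∈ s', ENNReal.ofReal (cr (q'' a) - cr a.1) := by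
            apply Finset.sum_le_sum
            intro a ha
            exact hνIoc a.1 a.2 (q'' a) (hq''gt a ha)
        _ = ENNReal.ofReal S := by
            rw [hS, ENNReal.ofReal_sum_of_nonneg hterm_nonneg]
    -- S is a limit of the empirical masses of ⋃ E
    have hmeas_eq : ∀ m, ∑ a ∈ s', ((μm m (Set.Iic ((q'' a : ℝ)))).toReal
        - (μm m (Set.Iic ((a.1 : ℝ)))).toReal)
        = (μm m (⋃ a ∈ s', E a)).toReal := by
      intro m
      haveI := hprob m
      have hterm : ∀ a ∈ s', (μm m (Set.Iic ((q'' a : ℝ)))).toReal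
          - (μm m (Set.Iic ((a.1 : ℝ)))).toReal = (μm m (E a)).toReal := by
        intro a ha
        have h7 : (a.1 : ℝ) ≤ (q'' a : ℝ) := by
          exact_mod_cast (lt_trans (Finset.mem_filter.mp ha).2 (hq''gt a ha)).le
        have hsplit : μm m (Set.Iic ((q'' a : ℝ)))
            = μm m (Set.Iic ((a.1 : ℝ))) + μm m (E a) := by
          rw [hE]; simp only
          rw [← Set.Iic_union_Ioc_eq_Iic h7]
          exact measure_union (Set.Iic_disjoint_Ioc le_rfl) measurableSet_Ioc
        rw [hsplit, ENNReal.toReal_add (measure_ne_top _ _) (measure_ne_top _ _)]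
        ring
      rw [Finset.sum_congr rfl hterm]
      rw [measure_biUnion_finset hdisj (fun a _ => measurableSet_Ioc)]
      rw [ENNReal.toReal_sum (fun a _ => measure_ne_top _ _)]
    have hStendsto : Tendsto (fun m => (μm m (⋃ a ∈ s', E a)).toReal) atTop (𝓝 S) := by
      have := tendsto_finset_sum (s := s')
        (f := fun a m => (μm m (Set.Iic ((q'' a : ℝ)))).toReal
          - (μm m (Set.Iic ((a.1 : ℝ)))).toReal)
        (fun a _ => ((hlim (q'' a)).sub (hlim a.1)))
      have heq : (fun m => ∑ a ∈ s', ((μm m (Set.Iic ((q'' a : ℝ)))).toReal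
          - (μm m (Set.Iic ((a.1 : ℝ)))).toReal))
          = fun m => (μm m (⋃ a ∈ s', E a)).toReal := funext hmeas_eq
      rw [← heq]
      exact this
    have hmono : ∀ m, (μm m (⋃ a ∈ s', E a)).toReal ≤ (μm m G).toReal := by
      intro m
      haveI := hprob m
      apply ENNReal.toReal_mono (measure_ne_top _ _)
      apply measure_mono
      exact Set.iUnion₂_subset hEG
    have hSle : S ≤ Filter.liminf (fun m => (μm m G).toReal) atTop := by
      have hbb : IsBoundedUnder (· ≥ ·) atTop (fun m => (μm m (⋃ a ∈ s', E a)).toReal) :=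
        hStendsto.isBoundedUnder_ge
      have hcb : IsCoboundedUnder (· ≥ ·) atTop (fun m => (μm m G).toReal) := by
        apply Filter.IsBoundedUnder.isCoboundedUnder_ge
        refine ⟨1, Filter.eventually_map.mpr (Filter.Eventually.of_forall fun m => ?_)⟩
        haveI := hprob m
        exact prob_toReal_le_one _ _
      calc S = Filter.liminf (fun m => (μm m (⋃ a ∈ s', E a)).toReal) atTop :=
            hStendsto.liminf_eq.symm
        _ ≤ Filter.liminf (fun m => (μm m G).toReal) atTop :=
            Filter.liminf_le_liminf (Filter.Eventually.of_forall hmono) hbb hcb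
    exact le_trans step1 (ENNReal.ofReal_le_ofReal hSle)


theorem helly (μs : ℕ → Measure ℝ) (hprob : ∀ j, IsProbabilityMeasure (μs j))
    (hsupp : ∀ j, μs j (Set.Icc (0:ℝ) 1) = 1) :
    ∃ (ψ : ℕ → ℕ) (ν : Measure ℝ), StrictMono ψ ∧ IsProbabilityMeasure ν ∧
      ∀ f : BoundedContinuousFunction ℝ ℝ,
        Tendsto (fun m => ∫ x, f x ∂(μs (ψ m))) atTop (𝓝 (∫ x, f x ∂ν)) := by
  classical
  haveI := hprob
  have hIic_zero : ∀ j (q : ℚ), (q:ℝ) < 0 → μs j (Set.Iic (q:ℝ)) = 0 := by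
    intro j q hq
    have hcompl : μs j (Set.Icc (0:ℝ) 1)ᶜ = 0 := by
      have := measure_compl (μ := μs j) (s := Set.Icc (0:ℝ) 1) measurableSet_Icc
        (measure_ne_top _ _)
      rw [hsupp j] at this
      simpa [measure_univ] using this
    have hsub : Set.Iic (q:ℝ) ⊆ (Set.Icc (0:ℝ) 1)ᶜ := by
      intro x hx
      simp only [Set.mem_compl_iff, Set.mem_Icc, not_and_or, not_le]
      left
      calc x ≤ (q:ℝ) := hx
        _ < 0 := hq
    exact le_antisymm (le_trans (measure_mono hsub) hcompl.le) zero_le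
  have hIic_one : ∀ j (q : ℚ), (1:ℝ) ≤ (q:ℝ) → μs j (Set.Iic (q:ℝ)) = 1 := by
    intro j q hq
    apply le_antisymm prob_le_one
    rw [← hsupp j]
    apply measure_mono
    intro x hx
    exact le_trans hx.2 hq
  haveI : CompactSpace (Set.Icc (0:ℝ) 1) := isCompact_iff_compactSpace.mp isCompact_Icc
  set H : ℕ → ℚ → Set.Icc (0:ℝ) 1 := fun j q =>
    ⟨(μs j (Set.Iic (q:ℝ))).toReal, ⟨ENNReal.toReal_nonneg, prob_toReal_le_one _ _⟩⟩ with hH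
  obtain ⟨c, -, ψ, hψ, hconv⟩ :=
    (isCompact_univ (X := ℚ → Set.Icc (0:ℝ) 1)).tendsto_subseq (x := H) (fun n => Set.mem_univ _)
  set cr : ℚ → ℝ := fun q => (c q : ℝ) with hcr_def
  have hc : ∀ q : ℚ, Tendsto (fun m => (μs (ψ m) (Set.Iic (q:ℝ))).toReal) atTop (𝓝 (cr q)) := by
    intro q
    have h1 := (tendsto_pi_nhds.mp hconv) q
    exact continuous_subtype_val.continuousAt.tendsto.comp h1
  have hcr0 : ∀ q : ℚ, 0 ≤ cr q := fun q => (c q).2.1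
  have hcr1 : ∀ q : ℚ, cr q ≤ 1 := fun q => (c q).2.2
  have hcrmono : Monotone cr := by
    intro q r hqr
    apply le_of_tendsto_of_tendsto (hc q) (hc r)
    apply Filter.Eventually.of_forall
    intro m
    exact ENNReal.toReal_mono (measure_ne_top _ _)
      (measure_mono (Set.Iic_subset_Iic.mpr (by exact_mod_cast hqr)))
  have hcrneg : ∀ q : ℚ, (q:ℝ) < 0 → cr q = 0 := by
    intro q hq
    apply tendsto_nhds_unique (hc q)
    have h2 : (fun m => (μs (ψ m) (Set.Iic (q:ℝ))).toReal) = fun _ => (0:ℝ) := by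
      funext m; rw [hIic_zero _ q hq]; simp
    rw [h2]
    exact tendsto_const_nhds
  have hcrone : ∀ q : ℚ, (1:ℝ) ≤ (q:ℝ) → cr q = 1 := by
    intro q hq
    apply tendsto_nhds_unique (hc q)
    have h2 : (fun m => (μs (ψ m) (Set.Iic (q:ℝ))).toReal) = fun _ => (1:ℝ) := by
      funext m; rw [hIic_one _ q hq]; simp
    rw [h2]
    exact tendsto_const_nhds
  -- the limiting Stieltjes function
  have hne : ∀ x : ℝ, Nonempty {q : ℚ // x < (q:ℝ)} := by
    intro x
    obtain ⟨q, hq⟩ := exists_rat_gt x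
    exact ⟨⟨q, hq⟩⟩
  set F0 : ℝ → ℝ := fun x => ⨅ q : {q : ℚ // x < (q:ℝ)}, cr q with hF0
  have hbdd : ∀ x : ℝ, BddBelow (Set.range (fun q : {q : ℚ // x < (q:ℝ)} => cr q)) := by
    intro x
    refine ⟨0, ?_⟩
    rintro y ⟨q, rfl⟩
    exact hcr0 q
  have hF0le : ∀ (x : ℝ) (q : ℚ), x < (q:ℝ) → F0 x ≤ cr q := by
    intro x q h
    exact ciInf_le (hbdd x) ⟨q, h⟩
  have hleF0 : ∀ (x : ℝ) (b : ℝ), (∀ q : ℚ, x < (q:ℝ) → b ≤ cr q) → b ≤ F0 x := by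
    intro x b h
    haveI := hne x
    exact le_ciInf (fun q => h q.1 q.2)
  have hF0mono : Monotone F0 := by
    intro x y hxy
    apply hleF0
    intro q hq
    exact hF0le x q (lt_of_le_of_lt hxy hq)
  have hF0nonneg : ∀ x, 0 ≤ F0 x := fun x => hleF0 x 0 (fun q _ => hcr0 q)
  have hF0le1 : ∀ x, F0 x ≤ 1 := by
    intro x
    obtain ⟨q, hq⟩ := exists_rat_gt x
    exact le_trans (hF0le x q hq) (hcr1 q)
  have hF0rc : ∀ x, ContinuousWithinAt F0 (Set.Ici x) x := by
    intro x
    rw [Metric.continuousWithinAt_iff]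
    intro ε hε
    haveI := hne x
    have h1 : F0 x < F0 x + ε := by linarith
    obtain ⟨⟨q, hqx⟩, hq2⟩ :=
      exists_lt_of_ciInf_lt (f := fun q : {q : ℚ // x < (q:ℝ)} => cr q) h1
    refine ⟨(q:ℝ) - x, by linarith, ?_⟩
    intro y hy hyd
    have hyx : x ≤ y := hy
    rw [Real.dist_eq] at hyd
    have hyq : y < (q:ℝ) := by
      rcases abs_lt.mp hyd with ⟨h3, h4⟩
      linarith
    have hFy1 : F0 y ≤ cr q := hF0le y q hyq
    have hFy2 : F0 x ≤ F0 y := hF0mono hyx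
    rw [Real.dist_eq, abs_lt]
    constructor <;> simp only at hq2 ⊢ <;> linarith
  set F : StieltjesFunction ℝ := ⟨F0, hF0mono, hF0rc⟩ with hFdef
  set ν := F.measure with hν
  have hFval : ∀ x, F x = F0 x := fun _ => rfl
  have hF0zero : ∀ x : ℝ, x < 0 → F0 x = 0 := by
    intro x hx
    obtain ⟨q, hq1, hq2⟩ := exists_rat_btwn hx
    exact le_antisymm (le_trans (hF0le x q hq1) (hcrneg q hq2).le) (hF0nonneg x)
  have hF0one : ∀ x : ℝ, 1 ≤ x → F0 x = 1 := by
    intro x hx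
    refine le_antisymm (hF0le1 x) (hleF0 x 1 (fun q hq => ?_))
    exact (hcrone q (le_trans hx hq.le)).ge
  have hFatBot : Tendsto F0 atBot (𝓝 0) := by
    apply Filter.Tendsto.congr' _ (tendsto_const_nhds (x := (0:ℝ)))
    filter_upwards [Filter.eventually_lt_atBot (0:ℝ)] with x hx
    exact (hF0zero x hx).symm
  have hFatTop : Tendsto F0 atTop (𝓝 1) := by
    apply Filter.Tendsto.congr' _ (tendsto_const_nhds (x := (1:ℝ)))
    filter_upwards [Filter.eventually_ge_atTop (1:ℝ)] with x hx
    exact (hF0one x hx).symm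
  have hprobν : IsProbabilityMeasure ν := by
    constructor
    rw [hν, F.measure_univ (l := 0) (u := 1) hFatBot hFatTop]
    norm_num
  have hνIoc : ∀ p q q'' : ℚ, q < q'' →
      ν (Set.Ioc (p:ℝ) (q:ℝ)) ≤ ENNReal.ofReal (cr q'' - cr p) := by
    intro p q q'' h
    rw [hν, F.measure_Ioc]
    apply ENNReal.ofReal_le_ofReal
    have h1 : F0 (q:ℝ) ≤ cr q'' := hF0le _ _ (by exact_mod_cast h)
    have h2 : cr p ≤ F0 (p:ℝ) :=
      hleF0 _ _ (fun r hr => hcrmono (by exact_mod_cast hr.le))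
    rw [hFval, hFval]
    linarith
  have hopens : ∀ G : Set ℝ, IsOpen G →
      ν G ≤ ENNReal.ofReal (Filter.liminf (fun m => (μs (ψ m) G).toReal) atTop) := by
    intro G hG
    set e : ℕ → ℚ × ℚ := fun n => (Denumerable.eqv (ℚ × ℚ)).symm n with he
    have hesurj : Function.Surjective e := (Denumerable.eqv (ℚ × ℚ)).symm.surjective
    set P : ℚ × ℚ → Prop := fun pq =>
      ∃ q' : ℚ, pq.2 < q' ∧ Set.Ioc ((pq.1:ℝ)) ((q':ℝ)) ⊆ G with hPdef
    set sfin : ℕ → Finset (ℚ × ℚ) := fun n => ((Finset.range (n+1)).image e).filter P with hsfin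
    set V : ℕ → Set ℝ := fun n => ⋃ pq ∈ sfin n, Set.Ioc ((pq.1:ℝ)) ((pq.2:ℝ)) with hV
    have hsfin_mono : ∀ {m n : ℕ}, m ≤ n → sfin m ⊆ sfin n := by
      intro m n hmn
      apply Finset.filter_subset_filter
      apply Finset.image_subset_image
      rw [Finset.range_subset_range]
      omega
    have hVmono : Monotone V := fun m n hmn =>
      Set.biUnion_subset_biUnion_left (fun pq hpq => hsfin_mono hmn hpq)
    have hVG : (⋃ n, V n) = G := by
      apply Set.Subset.antisymm
      · apply Set.iUnion_subset
        intro n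
        apply Set.iUnion₂_subset
        intro pq hpq
        obtain ⟨q', hq'1, hq'2⟩ := (Finset.mem_filter.mp hpq).2
        exact subset_trans (Set.Ioc_subset_Ioc le_rfl (by exact_mod_cast hq'1.le)) hq'2
      · intro x hx
        obtain ⟨δ, hδ, hball⟩ := Metric.isOpen_iff.mp hG x hx
        obtain ⟨p, hp1, hp2⟩ := exists_rat_btwn (show x - δ < x by linarith)
        obtain ⟨q, hq1, hq2⟩ := exists_rat_btwn (show x < x + δ/2 by linarith)
        obtain ⟨q', hq'1, hq'2⟩ := exists_rat_btwn (show (q:ℝ) < x + δ by linarith)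
        obtain ⟨k, hk⟩ := hesurj (p, q)
        have hPk : P (p, q) := by
          refine ⟨q', by exact_mod_cast hq'1, ?_⟩
          intro y hy
          apply hball
          rw [Metric.mem_ball, Real.dist_eq, abs_lt]
          constructor <;> simp only at hy
          · linarith [hy.1]
          · linarith [hy.2]
        have hmem : (p, q) ∈ sfin k := by
          rw [hsfin]
          simp only [Finset.mem_filter, Finset.mem_image, Finset.mem_range]
          exact ⟨⟨k, by omega, hk⟩, hPk⟩
        apply Set.mem_iUnion.mpr ⟨k, ?_⟩
        rw [hV]
        simp only
        apply Set.mem_biUnion hmem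
        exact ⟨hp2, hq1.le⟩
    have htend := tendsto_measure_iUnion_atTop (μ := ν) hVmono
    rw [hVG] at htend
    apply le_of_tendsto htend
    apply Filter.Eventually.of_forall
    intro n
    exact main_finite (fun m => μs (ψ m)) (fun m => hprob _) cr hcrmono hc ν hνIoc G
      (sfin n).card (sfin n) rfl (fun pq hpq => (Finset.mem_filter.mp hpq).2)
  haveI := hprobν
  set Pν : ProbabilityMeasure ℝ := ⟨ν, hprobν⟩ with hPν
  set Pm : ℕ → ProbabilityMeasure ℝ := fun m => ⟨μs (ψ m), hprob _⟩ with hPm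
  have hfinal : Tendsto Pm atTop (𝓝 Pν) := by
    apply tendsto_of_forall_isOpen_le_liminf
    intro G hG
    have hL := hopens G hG
    set L : ℝ := Filter.liminf (fun m => (μs (ψ m) G).toReal) atTop with hLdef
    have hbound : ∀ m : ℕ, (μs (ψ m) G).toReal ≤ 1 := fun m => prob_toReal_le_one _ _
    have hcob : IsCoboundedUnder (· ≥ ·) atTop (fun m => (μs (ψ m) G).toReal) := by
      apply Filter.IsBoundedUnder.isCoboundedUnder_ge
      exact ⟨1, Filter.eventually_map.mpr (Filter.Eventually.of_forall hbound)⟩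
    have hL0 : 0 ≤ L := by
      rw [hLdef]
      have h0 : (0:ℝ) = Filter.liminf (fun _ : ℕ => (0:ℝ)) atTop := (Filter.liminf_const 0).symm
      rw [h0]
      exact Filter.liminf_le_liminf
        (Filter.Eventually.of_forall (fun m => ENNReal.toReal_nonneg))
        ⟨0, Filter.eventually_map.mpr (Filter.Eventually.of_forall fun _ => le_rfl)⟩ hcob
    have hval : ∀ m : ℕ, ((Pm m G : ℝ≥0) : ℝ) = (μs (ψ m) G).toReal := fun m => rfl
    have hcoe : ((Filter.liminf (fun m => Pm m G) atTop : ℝ≥0) : ℝ)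
        = Filter.liminf (fun m => ((Pm m G : ℝ≥0) : ℝ)) atTop := by
      refine Monotone.map_liminf_of_continuousAt (F := atTop) NNReal.coe_mono
        (fun m => Pm m G) NNReal.continuous_coe.continuousAt ?_ ?_
      · exact Filter.IsBoundedUnder.isCoboundedUnder_ge
          ⟨1, Filter.eventually_map.mpr
            (Filter.Eventually.of_forall fun m => ProbabilityMeasure.apply_le_one _ _)⟩
      · exact ⟨0, Filter.eventually_map.mpr (Filter.Eventually.of_forall fun m => zero_le)⟩
    rw [← NNReal.coe_le_coe, hcoe]
    have hgoal_lhs : ((Pν G : ℝ≥0) : ℝ) = (ν G).toReal := rfl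
    rw [hgoal_lhs]
    have hliminf_eq : Filter.liminf (fun m => ((Pm m G : ℝ≥0) : ℝ)) atTop = L := by
      rw [hLdef]
      congr 1
    rw [hliminf_eq]
    calc (ν G).toReal ≤ (ENNReal.ofReal L).toReal :=
          ENNReal.toReal_mono ENNReal.ofReal_ne_top hL
      _ = L := ENNReal.toReal_ofReal hL0
  refine ⟨ψ, ν, hψ, hprobν, ?_⟩
  intro f
  exact ProbabilityMeasure.tendsto_iff_forall_integral_tendsto.mp hfinal f


/-- test functions: `y ↦ min ‖y (k+1) - y k‖ 2`. -/
def fbcf (k : ℕ) : BoundedContinuousFunction (ℕ → ℂ) ℝ :=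
  BoundedContinuousFunction.mkOfBound
    ⟨fun y => min ‖y (k+1) - y k‖ 2, by
      apply Continuous.min _ continuous_const
      exact ((continuous_apply (k+1)).sub (continuous_apply k)).norm⟩ 2
    (by
      intro x y
      have h1 : min ‖x (k+1) - x k‖ 2 ≤ 2 := min_le_right _ _
      have h2 : (0:ℝ) ≤ min ‖y (k+1) - y k‖ 2 := le_min (norm_nonneg _) (by norm_num)
      have h3 : min ‖y (k+1) - y k‖ 2 ≤ 2 := min_le_right _ _
      have h4 : (0:ℝ) ≤ min ‖x (k+1) - x k‖ 2 := le_min (norm_nonneg _) (by norm_num)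
      rw [Real.dist_eq, abs_sub_le_iff]
      constructor <;> simp only [ContinuousMap.coe_mk] <;> linarith)

lemma fbcf_apply (k : ℕ) (y : ℕ → ℂ) : fbcf k y = min ‖y (k+1) - y k‖ 2 := rfl

lemma fbcf_nonneg (k : ℕ) (y : ℕ → ℂ) : 0 ≤ fbcf k y :=
  le_min (norm_nonneg _) (by norm_num)

lemma shift_iterate (y : ℕ → ℂ) (n j : ℕ) : (shift^[n] y) j = y (j + n) := by
  induction n generalizing y with
  | zero => rfl
  | succ n ih =>
    rw [Function.iterate_succ_apply, ih (shift y)]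
    rfl

lemma orbit_coord (u : ℕ → ℂ) (n j : ℕ) : (shift^[n] (pt u)) j = u (j + n + 1) := by
  rw [shift_iterate]; rfl

lemma fbcf_orbit (u : ℕ → ℂ) (hu : ∀ n, 1 ≤ n → ‖u n‖ ≤ 1) (k n : ℕ) :
    fbcf k (shift^[n] (pt u)) = ‖u (n+k+2) - u (n+k+1)‖ := by
  rw [fbcf_apply, orbit_coord, orbit_coord]
  rw [show k + 1 + n + 1 = n + k + 2 from by omega, show k + n + 1 = n + k + 1 from by omega]
  apply min_eq_left
  calc ‖u (n+k+2) - u (n+k+1)‖ ≤ ‖u (n+k+2)‖ + ‖u (n+k+1)‖ := norm_sub_le _ _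
    _ ≤ 1 + 1 := add_le_add (hu _ (by omega)) (hu _ (by omega))
    _ = 2 := by norm_num

/-- rewrite of the statement's average. -/
lemma avg_rewrite (u : ℕ → ℂ) (N : ℕ) :
    ∑ n ∈ Finset.Icc 1 N, ‖u (n+1) - u n‖
      = ∑ n ∈ Finset.range N, ‖u (n+2) - u (n+1)‖ := by
  rw [← Finset.Ico_add_one_right_eq_Icc, Finset.sum_Ico_eq_sum_range]
  apply Finset.sum_congr (by congr 1)
  intro n _
  rw [show 1 + n + 1 = n + 2 from by omega, show 1 + n = n + 1 from by omega]

lemma key_avg (u : ℕ → ℂ) (hu : ∀ n, 1 ≤ n → ‖u n‖ ≤ 1)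
    (h : Filter.Tendsto (fun N : ℕ => (N : ℝ)⁻¹ * ∑ n ∈ Finset.Icc 1 N, ‖u (n + 1) - u n‖)
      atTop (𝓝 0)) (k : ℕ) :
    Filter.Tendsto (fun N : ℕ => (N : ℝ)⁻¹ * ∑ n ∈ Finset.range N, ‖u (n+k+2) - u (n+k+1)‖)
      atTop (𝓝 0) := by
  set g : ℕ → ℝ := fun m => ‖u (m+2) - u (m+1)‖ with hg
  have hg0 : ∀ m, 0 ≤ g m := fun m => norm_nonneg _
  have hg2 : ∀ m, g m ≤ 2 := by
    intro m
    calc ‖u (m+2) - u (m+1)‖ ≤ ‖u (m+2)‖ + ‖u (m+1)‖ := norm_sub_le _ _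
      _ ≤ 1 + 1 := add_le_add (hu _ (by omega)) (hu _ (by omega))
      _ = 2 := by norm_num
  have hstmt : Filter.Tendsto (fun N : ℕ => (N : ℝ)⁻¹ * ∑ n ∈ Finset.range N, g n)
      atTop (𝓝 0) := by
    have : (fun N : ℕ => (N : ℝ)⁻¹ * ∑ n ∈ Finset.Icc 1 N, ‖u (n + 1) - u n‖)
        = fun N : ℕ => (N : ℝ)⁻¹ * ∑ n ∈ Finset.range N, g n := by
      funext N
      rw [avg_rewrite]
    rwa [this] at h
  have hterm : ∀ n, ‖u (n+k+2) - u (n+k+1)‖ = g (n+k) := fun n => rfl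
  have hdiff : ∀ N : ℕ, |∑ n ∈ Finset.range N, g (n+k) - ∑ n ∈ Finset.range N, g n|
      ≤ 2 * k := by
    intro N
    have hT1 : ∑ i ∈ Finset.range (k+N), g i
        = ∑ i ∈ Finset.range k, g i + ∑ i ∈ Finset.range N, g (k+i) :=
      Finset.sum_range_add g k N
    have hT2 : ∑ i ∈ Finset.range (N+k), g i
        = ∑ i ∈ Finset.range N, g i + ∑ i ∈ Finset.range k, g (N+i) :=
      Finset.sum_range_add g N k
    have hTeq : ∑ i ∈ Finset.range (k+N), g i = ∑ i ∈ Finset.range (N+k), g i := by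
      rw [add_comm]
    have hS1 : ∑ n ∈ Finset.range N, g (n+k) = ∑ i ∈ Finset.range N, g (k+i) := by
      apply Finset.sum_congr rfl
      intro n _
      rw [add_comm]
    have hb1 : 0 ≤ ∑ i ∈ Finset.range k, g i := Finset.sum_nonneg (fun i _ => hg0 i)
    have hb2 : ∑ i ∈ Finset.range k, g i ≤ 2 * k := by
      calc ∑ i ∈ Finset.range k, g i ≤ ∑ i ∈ Finset.range k, (2:ℝ) :=
            Finset.sum_le_sum (fun i _ => hg2 i)
        _ = 2 * k := by
            rw [Finset.sum_const, Finset.card_range, nsmul_eq_mul]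
            ring
    have hb3 : 0 ≤ ∑ i ∈ Finset.range k, g (N+i) := Finset.sum_nonneg (fun i _ => hg0 _)
    have hb4 : ∑ i ∈ Finset.range k, g (N+i) ≤ 2 * k := by
      calc ∑ i ∈ Finset.range k, g (N+i) ≤ ∑ i ∈ Finset.range k, (2:ℝ) :=
            Finset.sum_le_sum (fun i _ => hg2 _)
        _ = 2 * k := by
            rw [Finset.sum_const, Finset.card_range, nsmul_eq_mul]
            ring
    rw [hS1, abs_sub_le_iff]
    constructor <;> linarith [hT1, hT2, hTeq]
  have hN0 : ∀ N : ℕ, (0:ℝ) ≤ (N:ℝ)⁻¹ := fun N => by positivity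
  have hlow : Filter.Tendsto
      (fun N : ℕ => (N : ℝ)⁻¹ * ∑ n ∈ Finset.range N, g n - 2 * k * (N:ℝ)⁻¹)
      atTop (𝓝 0) := by
    have h2 : Filter.Tendsto (fun N : ℕ => 2 * (k:ℝ) * (N:ℝ)⁻¹) atTop (𝓝 0) := by
      have := tendsto_inv_atTop_nhds_zero_nat.const_mul (2 * (k:ℝ))
      simpa using this
    have := hstmt.sub h2
    simpa using this
  have hupp : Filter.Tendsto
      (fun N : ℕ => (N : ℝ)⁻¹ * ∑ n ∈ Finset.range N, g n + 2 * k * (N:ℝ)⁻¹)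
      atTop (𝓝 0) := by
    have h2 : Filter.Tendsto (fun N : ℕ => 2 * (k:ℝ) * (N:ℝ)⁻¹) atTop (𝓝 0) := by
      have := tendsto_inv_atTop_nhds_zero_nat.const_mul (2 * (k:ℝ))
      simpa using this
    have := hstmt.add h2
    simpa using this
  have hsum_eq : ∀ N : ℕ, ∑ n ∈ Finset.range N, ‖u (n+k+2) - u (n+k+1)‖
      = ∑ n ∈ Finset.range N, g (n+k) := by
    intro N
    exact Finset.sum_congr rfl (fun n _ => hterm n)
  apply tendsto_of_tendsto_of_tendsto_of_le_of_le hlow hupp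
  · intro N
    dsimp only
    rw [hsum_eq N]
    have := hdiff N
    rw [abs_sub_le_iff] at this
    have h5 : (N:ℝ)⁻¹ * (∑ n ∈ Finset.range N, g n - ∑ n ∈ Finset.range N, g (n+k))
        ≤ (N:ℝ)⁻¹ * (2 * k) := mul_le_mul_of_nonneg_left this.2 (hN0 N)
    nlinarith [hN0 N]
  · intro N
    dsimp only
    rw [hsum_eq N]
    have := hdiff N
    rw [abs_sub_le_iff] at this
    have h5 : (N:ℝ)⁻¹ * (∑ n ∈ Finset.range N, g (n+k) - ∑ n ∈ Finset.range N, g n)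
        ≤ (N:ℝ)⁻¹ * (2 * k) := mul_le_mul_of_nonneg_left this.1 (hN0 N)
    nlinarith [hN0 N]

end MSV


/-- An arithmetic function `u : ℕ → 𝔻` is mean slowly varying, i.e.
`(1/N) Σ_{n ≤ N} |u(n+1) − u(n)| → 0`, if and only if every measure in `V(u)` is concentrated
on the set of fixed points of the shift — equivalently, every Furstenberg system of `u` is
measure-theoretically the identity. -/
theorem mean_slowly_varying_iff_identity (u : ℕ → ℂ) (hu : ∀ n, 1 ≤ n → ‖u n‖ ≤ 1) :
    Filter.Tendsto (fun N : ℕ => (N : ℝ)⁻¹ * ∑ n ∈ Finset.Icc 1 N, ‖u (n + 1) - u n‖)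
        atTop (𝓝 0)
      ↔ ∀ ν : Measure (ℕ → ℂ), memV u ν → ν {y : ℕ → ℂ | ∀ n, y (n + 1) = y n} = 1 := by
  constructor
  · intro h ν hν
    obtain ⟨N, hNmono, hN1, hconv⟩ := hν
    have hNtend : Filter.Tendsto N atTop atTop := hNmono.tendsto_atTop
    have hone := hconv 1
    have heq1 : (fun m => (N m : ℝ)⁻¹ * ∑ n ∈ Finset.range (N m),
        (1 : BoundedContinuousFunction (ℕ → ℂ) ℝ) (shift^[n] (pt u))) = fun _ => (1:ℝ) := by
      funext m
      have hcard : ∑ n ∈ Finset.range (N m),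
          (1 : BoundedContinuousFunction (ℕ → ℂ) ℝ) (shift^[n] (pt u)) = (N m : ℝ) := by
        simp
      rw [hcard, inv_mul_cancel₀]
      exact Nat.cast_ne_zero.mpr (by have := hN1 m; omega)
    rw [heq1] at hone
    have hν1 : ∫ y, (1 : BoundedContinuousFunction (ℕ → ℂ) ℝ) y ∂ν = 1 :=
      tendsto_nhds_unique hone tendsto_const_nhds
    have hν_univ : ν Set.univ = 1 := by
      have h2 : ∫ y, (1 : BoundedContinuousFunction (ℕ → ℂ) ℝ) y ∂ν = (ν Set.univ).toReal := by
        simp [integral_const, Measure.real]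
      rw [h2] at hν1
      exact (ENNReal.toReal_eq_one_iff _).mp hν1
    haveI : IsProbabilityMeasure ν := ⟨hν_univ⟩
    have hint : ∀ k, ∫ y, (MSV.fbcf k) y ∂ν = 0 := by
      intro k
      have h1 := hconv (MSV.fbcf k)
      have h2 : (fun m => (N m : ℝ)⁻¹ * ∑ n ∈ Finset.range (N m),
          MSV.fbcf k (shift^[n] (pt u)))
          = fun m => (N m : ℝ)⁻¹ * ∑ n ∈ Finset.range (N m), ‖u (n+k+2) - u (n+k+1)‖ := by
        funext m
        congr 1
        exact Finset.sum_congr rfl (fun n _ => MSV.fbcf_orbit u hu k n)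
      rw [h2] at h1
      have h3 := (MSV.key_avg u hu h k).comp hNtend
      exact tendsto_nhds_unique h1 h3
    have hnull : ∀ k, ν {y : ℕ → ℂ | ¬ (y (k+1) = y k)} = 0 := by
      intro k
      have hae := (integral_eq_zero_iff_of_nonneg (fun y => MSV.fbcf_nonneg k y)
        ((MSV.fbcf k).integrable ν)).mp (hint k)
      have hzero : ν {y : ℕ → ℂ | ¬ (MSV.fbcf k y = 0)} = 0 := by
        have h5 := hae
        rw [Filter.EventuallyEq, ae_iff] at h5
        simpa using h5
      apply measure_mono_null _ hzero
      intro y hy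
      simp only [Set.mem_setOf_eq] at hy ⊢
      intro h0
      have hpos : 0 < ‖y (k+1) - y k‖ := norm_sub_pos_iff.mpr hy
      have h6 : 0 < MSV.fbcf k y := lt_min hpos (by norm_num)
      rw [h0] at h6
      exact lt_irrefl _ h6
    have hcup : ν ({y : ℕ → ℂ | ∀ n, y (n+1) = y n}ᶜ) = 0 := by
      have hsets : ({y : ℕ → ℂ | ∀ n, y (n+1) = y n}ᶜ)
          = ⋃ k, {y : ℕ → ℂ | ¬ (y (k+1) = y k)} := by
        ext y
        simp [not_forall]
      rw [hsets]
      exact measure_iUnion_null hnull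
    have hle : (1:ℝ≥0∞) ≤ ν {y : ℕ → ℂ | ∀ n, y (n+1) = y n}
        + ν ({y : ℕ → ℂ | ∀ n, y (n+1) = y n}ᶜ) := by
      calc (1:ℝ≥0∞) = ν Set.univ := hν_univ.symm
        _ = ν ({y : ℕ → ℂ | ∀ n, y (n+1) = y n}
            ∪ {y : ℕ → ℂ | ∀ n, y (n+1) = y n}ᶜ) := by rw [Set.union_compl_self]
        _ ≤ _ := measure_union_le _ _
    rw [hcup, add_zero] at hle
    exact le_antisymm prob_le_one hle
  · intro hcon
    by_contra hnot
    rw [Metric.tendsto_atTop] at hnot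
    push_neg at hnot
    obtain ⟨ε, hε, hfreq⟩ := hnot
    set A : ℕ → ℝ := fun N => (N:ℝ)⁻¹ * ∑ n ∈ Finset.Icc 1 N, ‖u (n + 1) - u n‖ with hA
    have hA0 : ∀ n, 0 ≤ A n := fun n =>
      mul_nonneg (by positivity) (Finset.sum_nonneg fun _ _ => norm_nonneg _)
    have hfreq' : ∀ M, ∃ n, M ≤ n ∧ ε ≤ A n := by
      intro M
      obtain ⟨n, hn1, hn2⟩ := hfreq M
      refine ⟨n, hn1, ?_⟩
      rwa [Real.dist_eq, sub_zero, abs_of_nonneg (hA0 n)] at hn2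
    obtain ⟨φ, hφ0, hφsucc, hφA⟩ : ∃ φ : ℕ → ℕ, 1 ≤ φ 0 ∧ (∀ m, φ m + 1 ≤ φ (m+1))
        ∧ ∀ m, ε ≤ A (φ m) := by
      refine ⟨fun m => Nat.rec (hfreq' 1).choose (fun _ prev => (hfreq' (prev+1)).choose) m,
        (hfreq' 1).choose_spec.1, fun m => (hfreq' _).choose_spec.1, fun m => ?_⟩
      cases m with
      | zero => exact (hfreq' 1).choose_spec.2
      | succ m => exact (hfreq' _).choose_spec.2
    have hφmono : StrictMono φ := strictMono_nat_of_lt_succ (fun m => by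
      have := hφsucc m; omega)
    have hφ1 : ∀ m, 1 ≤ φ m := fun m => le_trans hφ0 (hφmono.monotone (Nat.zero_le m))
    have hx : ∀ n j, ‖(shift^[n] (pt u)) j‖ ≤ 1 := by
      intro n j
      rw [MSV.orbit_coord]
      exact hu _ (by omega)
    choose t ht1 ht2 using fun n => MSV.curve_surj (shift^[n] (pt u)) (hx n)
    set em : ℕ → Measure ℝ := fun j =>
      ((φ j : ℝ≥0∞))⁻¹ • ∑ n ∈ Finset.range (φ j), Measure.dirac (t n) with hem
    have hφ_ne : ∀ j, ((φ j : ℝ≥0∞)) ≠ 0 := fun j =>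
      Nat.cast_ne_zero.mpr (by have := hφ1 j; omega)
    have hem_apply : ∀ j (s : Set ℝ), (∀ n, t n ∈ s) → em j s = 1 := by
      intro j s hs
      rw [hem]
      simp only [Measure.smul_apply, smul_eq_mul]
      rw [Measure.finset_sum_apply]
      have h5 : ∀ n ∈ Finset.range (φ j), Measure.dirac (t n) s = 1 := fun n _ =>
        Measure.dirac_apply_of_mem (hs n)
      rw [Finset.sum_congr rfl h5, Finset.sum_const, Finset.card_range, nsmul_eq_mul, mul_one]
      exact ENNReal.inv_mul_cancel (hφ_ne j) (ENNReal.natCast_ne_top _)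
    have hem_prob : ∀ j, IsProbabilityMeasure (em j) :=
      fun j => ⟨hem_apply j Set.univ (fun n => Set.mem_univ _)⟩
    have hem_supp : ∀ j, em j (Set.Icc (0:ℝ) 1) = 1 :=
      fun j => hem_apply j _ (fun n => ht1 n)
    have hem_int : ∀ j (g : BoundedContinuousFunction ℝ ℝ),
        ∫ x, g x ∂(em j) = (φ j : ℝ)⁻¹ * ∑ n ∈ Finset.range (φ j), g (t n) := by
      intro j g
      rw [hem]
      simp only
      rw [integral_smul_measure]
      rw [integral_finset_sum_measure (fun n _ => g.integrable _)]
      have h5 : ∀ n ∈ Finset.range (φ j), ∫ x, g x ∂(Measure.dirac (t n)) = g (t n) :=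
        fun n _ => integral_dirac _ _
      rw [Finset.sum_congr rfl h5, ENNReal.toReal_inv]
      simp [smul_eq_mul]
    obtain ⟨ψ, μt, hψ, hμt_prob, hμt_conv⟩ := MSV.helly em hem_prob hem_supp
    haveI := hμt_prob
    set ν : Measure (ℕ → ℂ) := Measure.map MSV.curve μt with hν
    haveI hν_prob : IsProbabilityMeasure ν := by
      rw [hν]
      exact Measure.isProbabilityMeasure_map MSV.curve_continuous.aemeasurable
    have hν_int : ∀ f : BoundedContinuousFunction (ℕ → ℂ) ℝ,
        ∫ y, f y ∂ν = ∫ x, f (MSV.curve x) ∂μt := by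
      intro f
      rw [hν]
      exact integral_map MSV.curve_continuous.aemeasurable f.continuous.aestronglyMeasurable
    have hconv_all : ∀ f : BoundedContinuousFunction (ℕ → ℂ) ℝ,
        Filter.Tendsto (fun m => (φ (ψ m) : ℝ)⁻¹
          * ∑ n ∈ Finset.range (φ (ψ m)), f (shift^[n] (pt u)))
          atTop (𝓝 (∫ y, f y ∂ν)) := by
      intro f
      set g : BoundedContinuousFunction ℝ ℝ :=
        f.compContinuous ⟨MSV.curve, MSV.curve_continuous⟩ with hg
      have h1 := hμt_conv g
      have h2 : ∀ m, ∫ x, g x ∂(em (ψ m))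
          = (φ (ψ m) : ℝ)⁻¹ * ∑ n ∈ Finset.range (φ (ψ m)), f (shift^[n] (pt u)) := by
        intro m
        rw [hem_int (ψ m) g]
        congr 1
        apply Finset.sum_congr rfl
        intro n _
        show f (MSV.curve (t n)) = f (shift^[n] (pt u))
        rw [ht2 n]
      have h3 : ∫ x, g x ∂μt = ∫ y, f y ∂ν := by
        rw [hν_int f]
        rfl
      rw [h3] at h1
      exact h1.congr h2
    have hmemV : memV u ν := ⟨fun m => φ (ψ m), hφmono.comp hψ, fun m => hφ1 _, hconv_all⟩
    have hS1 := hcon ν hmemV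
    have hSmeas : MeasurableSet {y : ℕ → ℂ | ∀ n, y (n+1) = y n} := by
      have h7 : {y : ℕ → ℂ | ∀ n, y (n+1) = y n} = ⋂ k, {y : ℕ → ℂ | y (k+1) = y k} := by
        ext y
        simp [Set.mem_iInter]
      rw [h7]
      exact MeasurableSet.iInter (fun k =>
        measurableSet_eq_fun (measurable_pi_apply _) (measurable_pi_apply _))
    have hae : ∀ᵐ y ∂ν, y ∈ {y : ℕ → ℂ | ∀ n, y (n+1) = y n} := by
      rw [ae_iff]
      have h8 := (prob_compl_eq_zero_iff hSmeas).mpr hS1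
      have h9 : {y : ℕ → ℂ | ¬ y ∈ {y : ℕ → ℂ | ∀ n, y (n+1) = y n}}
          = ({y : ℕ → ℂ | ∀ n, y (n+1) = y n})ᶜ := rfl
      rw [h9]
      exact h8
    have hint0 : ∫ y, (MSV.fbcf 0) y ∂ν = 0 := by
      have hzero : (MSV.fbcf 0 : (ℕ → ℂ) → ℝ) =ᵐ[ν] 0 := by
        filter_upwards [hae] with y hy
        have h10 : y 1 = y 0 := hy 0
        show min ‖y 1 - y 0‖ 2 = 0
        rw [h10, sub_self, norm_zero]
        norm_num
      rw [integral_congr_ae hzero]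
      simp
    have hconv0 := hconv_all (MSV.fbcf 0)
    rw [hint0] at hconv0
    have havg : ∀ m, ε ≤ (φ (ψ m) : ℝ)⁻¹
        * ∑ n ∈ Finset.range (φ (ψ m)), MSV.fbcf 0 (shift^[n] (pt u)) := by
      intro m
      have h4 : ∑ n ∈ Finset.range (φ (ψ m)), MSV.fbcf 0 (shift^[n] (pt u))
          = ∑ n ∈ Finset.Icc 1 (φ (ψ m)), ‖u (n+1) - u n‖ := by
        rw [MSV.avg_rewrite]
        apply Finset.sum_congr rfl
        intro n _
        exact MSV.fbcf_orbit u hu 0 n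
      rw [h4]
      exact hφA (ψ m)
    have hfin : ε ≤ 0 := ge_of_tendsto hconv0 (Filter.Eventually.of_forall havg)
    linarith
end
end

section
/- Let u : ℕ → 𝔻 be a bounded arithmetic function with liminf_{ℓ→∞} (1/ℓ) Σ_{1 ≤ j ≤ ℓ} |u(j)| = α > 0. Assume that u admits the identity as a Furstenberg system, i.e., there exists ν ∈ V(u) with Z_0 ∘ S = Z_0 ν-almost everywhere. Then u does not have zero mean on typical short intervals: it is not the case that for all sequences (M_k), (H_k) of positive integers with M_k → ∞, H_k → ∞ and H_k/M_k → 0, one has (1/M_k) Σ_{1 ≤ m ≤ M_k} | (1/H_k) Σ_{0 ≤ h < H_k} u(m+h) | → 0. -/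
open MeasureTheory Filter Topology

noncomputable section

lemma shift_cont : Continuous shift := continuous_pi fun n => continuous_apply (n + 1)

lemma shift_iter_cont (n : ℕ) : Continuous (shift^[n]) := shift_cont.iterate n

lemma shift_iter (n : ℕ) (y : ℕ → ℂ) (j : ℕ) : shift^[n] y j = y (j + n) := by
  induction n generalizing y with
  | zero => rfl
  | succ n ih =>
    rw [Function.iterate_succ_apply, ih]
    rfl

/-- The bounded continuous function `y ↦ min 1 ‖(1/H) Σ_{h<H} y h‖`. -/
def avgF (H : ℕ) : BoundedContinuousFunction (ℕ → ℂ) ℝ :=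
  BoundedContinuousFunction.ofNormedAddCommGroup
    (fun y => min 1 ‖(H : ℂ)⁻¹ * ∑ h ∈ Finset.range H, y h‖)
    (continuous_const.min
      ((continuous_const.mul (continuous_finset_sum _ fun h _ => continuous_apply h)).norm))
    1
    (fun y => by
      rw [Real.norm_eq_abs, abs_le]
      constructor
      · exact le_trans (by norm_num) (le_min zero_le_one (norm_nonneg _))
      · exact min_le_left _ _)

lemma avgF_apply (H : ℕ) (y : ℕ → ℂ) :
    avgF H y = min 1 ‖(H : ℂ)⁻¹ * ∑ h ∈ Finset.range H, y h‖ := rfl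

/-- The bounded continuous function `y ↦ min 1 ‖y 1 - y 0‖`. -/
def difF : BoundedContinuousFunction (ℕ → ℂ) ℝ :=
  BoundedContinuousFunction.ofNormedAddCommGroup
    (fun y => min 1 ‖y 1 - y 0‖)
    (continuous_const.min (((continuous_apply 1).sub (continuous_apply 0)).norm))
    1
    (fun y => by
      rw [Real.norm_eq_abs, abs_le]
      constructor
      · exact le_trans (by norm_num) (le_min zero_le_one (norm_nonneg _))
      · exact min_le_left _ _)

lemma difF_apply (y : ℕ → ℂ) : difF y = min 1 ‖y 1 - y 0‖ := rfl

lemma min_one_eq_zero {t : ℝ} (_ht : 0 ≤ t) (h : min 1 t = 0) : t = 0 := by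
  rcases le_total 1 t with h1 | h1
  · rw [min_eq_left h1] at h; norm_num at h
  · rwa [min_eq_right h1] at h

lemma memV_prob {u : ℕ → ℂ} {ν : Measure (ℕ → ℂ)} (h : memV u ν) :
    IsProbabilityMeasure ν := by
  obtain ⟨N, hN, hN1, hconv⟩ := h
  have h1 := hconv 1
  have heq : ∀ m, (N m : ℝ)⁻¹ * ∑ n ∈ Finset.range (N m), (1 : BoundedContinuousFunction (ℕ → ℂ) ℝ) (shift^[n] (pt u)) = 1 := by
    intro m
    have : ((N m : ℝ)) ≠ 0 := by
      have := hN1 m; positivity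
    simp [this]
  rw [show (fun m => (N m : ℝ)⁻¹ * ∑ n ∈ Finset.range (N m), (1 : BoundedContinuousFunction (ℕ → ℂ) ℝ) (shift^[n] (pt u))) = fun _ => (1:ℝ) from funext heq] at h1
  have hlim : (∫ y, (1 : BoundedContinuousFunction (ℕ → ℂ) ℝ) y ∂ν) = 1 :=
    tendsto_nhds_unique h1 tendsto_const_nhds
  simp only [BoundedContinuousFunction.coe_one, Pi.one_apply, integral_const, smul_eq_mul,
    mul_one] at hlim
  exact ⟨by rw [← ENNReal.toReal_eq_one_iff] ; exact hlim⟩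

/-- Shift invariance of integrals of bounded continuous functions against `ν ∈ V(u)`. -/
lemma memV_integral_shift {u : ℕ → ℂ} {ν : Measure (ℕ → ℂ)} (h : memV u ν)
    (f : BoundedContinuousFunction (ℕ → ℂ) ℝ) :
    ∫ y, f (shift y) ∂ν = ∫ y, f y ∂ν := by
  obtain ⟨N, hN, hN1, hconv⟩ := h
  set g : BoundedContinuousFunction (ℕ → ℂ) ℝ := f.compContinuous ⟨shift, shift_cont⟩ with hg
  have h1 := hconv g
  have h2 := hconv f
  have hgy : ∀ y, g y = f (shift y) := fun y => rfl
  have hdiff : Tendsto (fun m =>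
      (N m : ℝ)⁻¹ * ∑ n ∈ Finset.range (N m), g (shift^[n] (pt u)) -
      (N m : ℝ)⁻¹ * ∑ n ∈ Finset.range (N m), f (shift^[n] (pt u))) atTop (𝓝 0) := by
    apply squeeze_zero_norm (a := fun m => 2 * ‖f‖ / (N m : ℝ))
    · intro m
      have key : ∀ (a : ℕ → ℝ) (K : ℕ), ∑ n ∈ Finset.range K, a (n+1) =
          ∑ n ∈ Finset.range K, a n - a 0 + a K := by
        intro a K
        have h1' := Finset.sum_range_succ' a K
        have h2' := Finset.sum_range_succ a K
        linarith
      have hsum : ∑ n ∈ Finset.range (N m), g (shift^[n] (pt u)) =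
          ∑ n ∈ Finset.range (N m), f (shift^[n] (pt u)) -
            f (pt u) + f (shift^[N m] (pt u)) := by
        have step : ∀ n, g (shift^[n] (pt u)) = f (shift^[n+1] (pt u)) := by
          intro n; rw [hgy, Function.iterate_succ_apply']
        rw [Finset.sum_congr rfl fun n _ => step n, key (fun n => f (shift^[n] (pt u))) (N m)]
        rfl
      rw [hsum]
      have hNm : (0:ℝ) < N m := by have := hN1 m; positivity
      rw [show (N m : ℝ)⁻¹ * (∑ n ∈ Finset.range (N m), f (shift^[n] (pt u)) - f (pt u) + f (shift^[N m] (pt u))) - (N m : ℝ)⁻¹ * ∑ n ∈ Finset.range (N m), f (shift^[n] (pt u)) = (N m : ℝ)⁻¹ * (f (shift^[N m] (pt u)) - f (pt u)) by ring]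
      rw [norm_mul, norm_inv, Real.norm_natCast, div_eq_inv_mul]
      gcongr
      calc ‖f (shift^[N m] (pt u)) - f (pt u)‖ ≤ ‖f (shift^[N m] (pt u))‖ + ‖f (pt u)‖ :=
            norm_sub_le _ _
        _ ≤ ‖f‖ + ‖f‖ := add_le_add (f.norm_coe_le_norm _) (f.norm_coe_le_norm _)
        _ = 2 * ‖f‖ := by ring
    · apply Tendsto.div_atTop tendsto_const_nhds
      exact tendsto_natCast_atTop_atTop.comp hN.tendsto_atTop
  have := tendsto_nhds_unique (h1.sub h2) hdiff
  have := sub_eq_zero.mp this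
  rw [← this]
  exact integral_congr_ae (Filter.Eventually.of_forall fun y => (hgy y).symm)

lemma memV_integral_shift_iter {u : ℕ → ℂ} {ν : Measure (ℕ → ℂ)} (h : memV u ν)
    (f : BoundedContinuousFunction (ℕ → ℂ) ℝ) (n : ℕ) :
    ∫ y, f (shift^[n] y) ∂ν = ∫ y, f y ∂ν := by
  induction n with
  | zero => simp
  | succ n ih =>
    have := memV_integral_shift h (f.compContinuous ⟨shift^[n], shift_iter_cont n⟩)
    simp only [BoundedContinuousFunction.compContinuous_apply, ContinuousMap.coe_mk] at this
    calc ∫ y, f (shift^[n+1] y) ∂ν = ∫ y, f (shift^[n] (shift y)) ∂ν := by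
          simp [Function.iterate_succ_apply]
      _ = ∫ y, f (shift^[n] y) ∂ν := this
      _ = ∫ y, f y ∂ν := ih

lemma sum_Icc_one (f : ℕ → ℝ) (K : ℕ) :
    ∑ j ∈ Finset.Icc 1 K, f j = ∑ n ∈ Finset.range K, f (1 + n) := by
  rw [← Finset.Ico_add_one_right_eq_Icc, Finset.sum_Ico_eq_sum_range]
  simp

/-- If `u : ℕ → 𝔻` satisfies `liminf_ℓ (1/ℓ) Σ_{j ≤ ℓ} |u(j)| = α > 0` and some Furstenberg
system of `u` is the identity (some `ν ∈ V(u)` satisfies `Z_0 ∘ S = Z_0` ν-a.e.), then `u`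
does not have zero mean on typical short intervals. -/
theorem no_zero_mean_on_short_intervals (u : ℕ → ℂ) (hu : ∀ n, 1 ≤ n → ‖u n‖ ≤ 1) (α : ℝ)
    (hα : 0 < α)
    (hliminf : Filter.liminf
      (fun ℓ : ℕ => (ℓ : ℝ)⁻¹ * ∑ j ∈ Finset.Icc 1 ℓ, ‖u j‖) atTop = α)
    (hid : ∃ ν : Measure (ℕ → ℂ), memV u ν ∧ ∀ᵐ y ∂ν, y 1 = y 0) :
    ¬ (∀ M H : ℕ → ℕ, Filter.Tendsto M atTop atTop → Filter.Tendsto H atTop atTop →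
        Filter.Tendsto (fun k => (H k : ℝ) / (M k : ℝ)) atTop (𝓝 0) →
        Filter.Tendsto
          (fun k => (M k : ℝ)⁻¹ * ∑ m ∈ Finset.Icc 1 (M k),
            ‖(H k : ℂ)⁻¹ * ∑ h ∈ Finset.range (H k), u (m + h)‖)
          atTop (𝓝 0)) := by
  obtain ⟨ν, hmem, hae⟩ := hid
  haveI : IsProbabilityMeasure ν := memV_prob hmem
  obtain ⟨N, hN, hN1, hconv⟩ := hmem
  intro Htop
  -- a.e. every coordinate equals the next one
  have hdif0 : ∫ y, difF y ∂ν = 0 := by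
    have heq : (fun y => difF y) =ᵐ[ν] (fun _ => (0:ℝ)) := by
      filter_upwards [hae] with y hy
      rw [difF_apply, hy]
      simp
    rw [integral_congr_ae heq, integral_zero]
  have hconstn : ∀ n : ℕ, ∀ᵐ y ∂ν, y (n+1) = y n := by
    intro n
    have hint : ∫ y, difF (shift^[n] y) ∂ν = 0 := by
      rw [memV_integral_shift_iter ⟨N, hN, hN1, hconv⟩ difF n, hdif0]
    have hnn : 0 ≤ fun y => difF (shift^[n] y) := by
      intro y
      simp only [Pi.zero_apply, difF_apply]
      exact le_min zero_le_one (norm_nonneg _)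
    have hInt : Integrable (fun y => difF (shift^[n] y)) ν :=
      (difF.compContinuous ⟨shift^[n], shift_iter_cont n⟩).integrable ν
    have hz := (integral_eq_zero_iff_of_nonneg hnn hInt).mp hint
    filter_upwards [hz] with y hy
    simp only [Pi.zero_apply, difF_apply, shift_iter] at hy
    have h1 := min_one_eq_zero (norm_nonneg _) hy
    have h2 := sub_eq_zero.mp (norm_eq_zero.mp h1)
    rw [show 1 + n = n + 1 by omega, show 0 + n = n by omega] at h2
    exact h2
  have hconstAll : ∀ᵐ y ∂ν, ∀ n, y n = y 0 := by
    filter_upwards [ae_all_iff.mpr hconstn] with y hy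
    intro n
    induction n with
    | zero => rfl
    | succ n ih => rw [hy n, ih]
  set β := ∫ y, avgF 1 y ∂ν with hβdef
  -- empirical values of avgF H
  have hemp : ∀ H : ℕ, ∀ n : ℕ, avgF H (shift^[n] (pt u)) =
      min 1 ‖(H:ℂ)⁻¹ * ∑ h ∈ Finset.range H, u ((n+1) + h)‖ := by
    intro H n
    rw [avgF_apply]
    congr 3
    apply Finset.sum_congr rfl
    intro h _
    rw [shift_iter]
    show u (h + n + 1) = u ((n+1) + h)
    congr 1
    omega
  have hbase : ∀ m, (N m : ℝ)⁻¹ * ∑ n ∈ Finset.range (N m), avgF 1 (shift^[n] (pt u)) =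
      (N m : ℝ)⁻¹ * ∑ j ∈ Finset.Icc 1 (N m), ‖u j‖ := by
    intro m
    congr 1
    rw [sum_Icc_one]
    apply Finset.sum_congr rfl
    intro n _
    rw [hemp 1 n]
    simp only [Finset.sum_range_one, Nat.cast_one, inv_one, one_mul, Nat.add_zero]
    rw [min_eq_right (hu _ (by omega))]
    rw [Nat.add_comm n 1]
  have hαβ : α ≤ β := by
    have htend : Tendsto (fun m => (N m : ℝ)⁻¹ * ∑ j ∈ Finset.Icc 1 (N m), ‖u j‖)
        atTop (𝓝 β) := by
      have h := hconv (avgF 1)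
      rwa [funext hbase] at h
    by_contra hlt
    push_neg at hlt
    obtain ⟨c, hc1, hc2⟩ := exists_between hlt
    have hub : ∀ ℓ : ℕ, (ℓ:ℝ)⁻¹ * ∑ j ∈ Finset.Icc 1 ℓ, ‖u j‖ ≤ 1 := by
      intro ℓ
      rcases Nat.eq_zero_or_pos ℓ with h0 | h0
      · subst h0; simp
      · have hpos : (0:ℝ) < ℓ := by exact_mod_cast h0
        have hsum : ∑ j ∈ Finset.Icc 1 ℓ, ‖u j‖ ≤ (ℓ:ℝ) := by
          calc ∑ j ∈ Finset.Icc 1 ℓ, ‖u j‖ ≤ ∑ _j ∈ Finset.Icc 1 ℓ, (1:ℝ) :=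
              Finset.sum_le_sum fun j hj => hu j (Finset.mem_Icc.mp hj).1
            _ = ((Finset.Icc 1 ℓ).card : ℝ) := by simp
            _ = (ℓ:ℝ) := by rw [Nat.card_Icc]; simp
        calc (ℓ:ℝ)⁻¹ * ∑ j ∈ Finset.Icc 1 ℓ, ‖u j‖ ≤ (ℓ:ℝ)⁻¹ * (ℓ:ℝ) :=
            mul_le_mul_of_nonneg_left hsum (by positivity)
          _ = 1 := inv_mul_cancel₀ hpos.ne'
    have hco : IsBoundedUnder (· ≥ ·) atTop
        (fun ℓ : ℕ => (ℓ:ℝ)⁻¹ * ∑ j ∈ Finset.Icc 1 ℓ, ‖u j‖) :=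
      Filter.isBoundedUnder_of ⟨0, fun ℓ => by positivity⟩
    have hev : ∀ᶠ ℓ : ℕ in atTop, c < (ℓ:ℝ)⁻¹ * ∑ j ∈ Finset.Icc 1 ℓ, ‖u j‖ :=
      eventually_lt_of_lt_liminf
        (show c < liminf (fun ℓ : ℕ => (ℓ:ℝ)⁻¹ * ∑ j ∈ Finset.Icc 1 ℓ, ‖u j‖) atTop by
          rw [hliminf]; exact hc2) hco
    have hev2 : ∀ᶠ m in atTop, c < (N m:ℝ)⁻¹ * ∑ j ∈ Finset.Icc 1 (N m), ‖u j‖ :=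
      hN.tendsto_atTop.eventually hev
    have : c ≤ β := ge_of_tendsto htend (hev2.mono fun m hm => hm.le)
    linarith
  -- all avgF H have the same integral
  have hFH : ∀ H : ℕ, 1 ≤ H → ∫ y, avgF H y ∂ν = β := by
    intro H hH
    rw [hβdef]
    apply integral_congr_ae
    filter_upwards [hconstAll] with y hy
    rw [avgF_apply, avgF_apply]
    have hsum : ∑ h ∈ Finset.range H, y h = (H : ℂ) * y 0 := by
      rw [Finset.sum_congr rfl fun h _ => hy h]
      simp [Finset.sum_const, nsmul_eq_mul]
    have hH0 : (H:ℂ) ≠ 0 := by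
      exact_mod_cast Nat.cast_ne_zero.mpr (by omega)
    rw [hsum, inv_mul_cancel_left₀ hH0]
    simp
  -- diagonal selection
  have hsel : ∀ k : ℕ, ∃ m : ℕ, (k+1)^2 ≤ N m ∧
      α - 1/(k+1:ℝ) < (N m : ℝ)⁻¹ * ∑ n ∈ Finset.range (N m),
        avgF (k+1) (shift^[n] (pt u)) := by
    intro k
    have hev1 : ∀ᶠ m in atTop, (k+1)^2 ≤ N m :=
      hN.tendsto_atTop.eventually_ge_atTop ((k+1)^2)
    have htd := hconv (avgF (k+1))
    rw [hFH (k+1) (by omega)] at htd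
    have hgt : α - 1/(k+1:ℝ) < β := by
      have hp : (0:ℝ) < 1/(k+1:ℝ) := by positivity
      linarith
    have hev2 := htd.eventually (eventually_gt_nhds hgt)
    exact (hev1.and hev2).exists.imp fun m hm => ⟨hm.1, hm.2⟩
  choose msel hsel1 hsel2 using hsel
  set M : ℕ → ℕ := fun k => N (msel k) with hM
  set Hs : ℕ → ℕ := fun k => k + 1 with hHs
  have hMlarge : ∀ k, (k+1)^2 ≤ M k := fun k => hsel1 k
  have hkle : ∀ k : ℕ, k ≤ (k+1)^2 := by
    intro k
    calc k ≤ k + 1 := Nat.le_succ k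
      _ ≤ (k+1)^2 := Nat.le_self_pow (by omega) _
  have hMtop : Tendsto M atTop atTop := by
    apply tendsto_atTop_mono (fun k => le_trans (hkle k) (hMlarge k)) (f := id) tendsto_id
  have hHtop : Tendsto Hs atTop atTop := tendsto_add_atTop_nat 1
  have hratio : Tendsto (fun k => (Hs k : ℝ) / (M k : ℝ)) atTop (𝓝 0) := by
    have hb : ∀ k : ℕ, (Hs k : ℝ) / (M k : ℝ) ≤ 1 / (k+1:ℝ) := by
      intro k
      have hMpos : (0:ℝ) < M k := by
        have h1 : 1 ≤ M k := le_trans (Nat.one_le_pow 2 (k+1) (Nat.succ_pos k)) (hMlarge k)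
        exact_mod_cast Nat.lt_of_lt_of_le Nat.zero_lt_one h1
      have hkpos : (0:ℝ) < (k+1:ℝ) := by positivity
      rw [div_le_div_iff₀ hMpos hkpos]
      have hle : ((k+1)^2 : ℝ) ≤ (M k : ℝ) := by exact_mod_cast hMlarge k
      have hcast : ((Hs k : ℕ) : ℝ) = (k+1:ℝ) := by simp [hHs]
      rw [hcast]
      nlinarith
    exact squeeze_zero (fun k => by positivity) hb tendsto_one_div_add_atTop_nhds_zero_nat
  have hmain := Htop M Hs hMtop hHtop hratio
  have hlb : ∀ k : ℕ, α - 1/(k+1:ℝ) ≤ (M k : ℝ)⁻¹ * ∑ m ∈ Finset.Icc 1 (M k),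
      ‖(Hs k : ℂ)⁻¹ * ∑ h ∈ Finset.range (Hs k), u (m + h)‖ := by
    intro k
    refine le_trans (hsel2 k).le ?_
    rw [sum_Icc_one]
    apply mul_le_mul_of_nonneg_left _ (by positivity)
    apply Finset.sum_le_sum
    intro n _
    rw [hemp (k+1) n]
    refine le_trans (min_le_right _ _) (le_of_eq ?_)
    simp only [hHs]
    congr 1
    congr 1
    apply Finset.sum_congr rfl
    intro h _
    congr 1
    omega
  have hlim2 : Tendsto (fun k : ℕ => α - 1/(k+1:ℝ)) atTop (𝓝 α) := by
    have h0 : Tendsto (fun k : ℕ => α - 1/(k+1:ℝ)) atTop (𝓝 (α - 0)) :=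
      Tendsto.sub tendsto_const_nhds tendsto_one_div_add_atTop_nhds_zero_nat
    simpa using h0
  have hfinal : α ≤ 0 := le_of_tendsto_of_tendsto' hlim2 hmain hlb
  linarith
end
end
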